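/- For integers m ≥ 0 and n, k, s, t ≥ 1, one has x₀^m ш (x₀^n x₁^k x₀^s x₁^t) = Σ_{m₁+m₂+m₃+m₄=m, m_i ≥ 0} C(m₁+n-1, n-1) · C(m₃+s-1, s-1) · x₀^{m₁+n} 𝔅_{k}^{m₂} x₁ x₀^{m₃+s} 𝔅_{t+1}^{m₄}, an identity of multisets of words, where a binomial coefficient c multiplying a multiset means the multiset repeated c times. -/

import Mathlib

/-- The shuffle product of two words, as a multiset of words. -/
def shuffle {X : Type*} : List X → List X → Multiset (List X)
  | u, [] => {u}
  | [], v => {v}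
  | a :: u, b :: v =>
      (shuffle u (b :: v)).map (a :: ·) + (shuffle (a :: u) v).map (b :: ·)
termination_by u v => u.length + v.length

/-- The two-letter alphabet `X = {x₀, x₁}`. -/
def x0 : Bool := false
def x1 : Bool := true

/-- `𝔅_r^m`: the multiset of all words `x₀^{m₁} x₁ x₀^{m₂} x₁ ⋯ x₁ x₀^{m_r}`
with `m₁ + ⋯ + m_r = m`, `m_i ≥ 0`. -/
def B (r m : ℕ) : Multiset (List Bool) :=
  (Finset.Nat.antidiagonalTuple r m).val.map fun f =>
    List.intercalate [x1] (List.ofFn fun i => List.replicate (f i) x0)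

/-- `S w T`: the multiset of all concatenations `u ++ w ++ v` with `u ∈ S`, `v ∈ T`,
counted with multiplicity. -/
def msConcat {X : Type*} (S : Multiset (List X)) (w : List X) (T : Multiset (List X)) :
    Multiset (List X) :=
  S.bind fun u => T.map fun v => u ++ w ++ v

section helpers

lemma map_finsetSum' {γ α β : Type*} (s : Finset γ) (g : γ → Multiset α) (f : α → β) :
    (∑ i ∈ s, g i).map f = ∑ i ∈ s, (g i).map f := by
  classical
  induction s using Finset.cons_induction with
  | empty => simp
  | cons a s h ih => rw [Finset.sum_cons, Finset.sum_cons, Multiset.map_add, ih]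

lemma bind_finsetSum {γ α β : Type*} (s : Finset γ) (g : γ → Multiset α) (f : α → Multiset β) :
    (∑ i ∈ s, g i).bind f = ∑ i ∈ s, (g i).bind f := by
  classical
  induction s using Finset.cons_induction with
  | empty => simp
  | cons a s h ih => rw [Finset.sum_cons, Finset.sum_cons, Multiset.add_bind, ih]

lemma bind_sum_comm {γ α β : Type*} (X : Multiset α) (s : Finset γ) (T : α → γ → Multiset β) :
    (X.bind fun u => ∑ i ∈ s, T u i) = ∑ i ∈ s, X.bind fun u => T u i := by
  classical
  induction s using Finset.cons_induction with
  | empty => simp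
  | cons a s h ih =>
      simp only [Finset.sum_cons]
      rw [Multiset.bind_add, ih]

lemma bind_nsmul {α β : Type*} (X : Multiset α) (c : ℕ) (Y : α → Multiset β) :
    (X.bind fun u => c • Y u) = c • X.bind Y := by
  induction c with
  | zero => simp
  | succ c ih => simp [succ_nsmul, Multiset.bind_add, ih]

lemma shuffle_nil_left {X : Type*} (v : List X) : shuffle [] v = {v} := by
  cases v <;> simp [shuffle]

lemma shuffle_nil_right {X : Type*} (u : List X) : shuffle u [] = {u} := by
  cases u <;> simp [shuffle]

lemma shuffle_cons_cons {X : Type*} (a b : X) (u v : List X) :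
    shuffle (a :: u) (b :: v) =
      (shuffle u (b :: v)).map (a :: ·) + (shuffle (a :: u) v).map (b :: ·) := by
  rw [shuffle]

lemma shuffle_replicate_cons {X : Type*} (c x : X) (v : List X) (m : ℕ) :
    shuffle (List.replicate m c) (x :: v) =
      ∑ p ∈ Finset.HasAntidiagonal.antidiagonal m,
        (shuffle (List.replicate p.2 c) v).map (fun w => List.replicate p.1 c ++ x :: w) := by
  induction m with
  | zero => simp [shuffle_nil_left]
  | succ m ih =>
      rw [List.replicate_succ, shuffle_cons_cons, ih, Finset.Nat.sum_antidiagonal_succ,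
        map_finsetSum', add_comm]
      congr 1
      all_goals simp [List.replicate_succ, Multiset.map_map, Function.comp]

end helpers

def I : ℕ → List Bool → Multiset (List Bool)
  | m, [] => {List.replicate m x0}
  | m, x :: v =>
      ∑ p ∈ Finset.HasAntidiagonal.antidiagonal m, (I p.2 v).map fun w => List.replicate p.1 x0 ++ x :: w

lemma shuffle_eq_I (m : ℕ) (v : List Bool) : shuffle (List.replicate m x0) v = I m v := by
  induction v generalizing m with
  | nil => rw [shuffle_nil_right, I]
  | cons x v ih =>
      rw [shuffle_replicate_cons, I]
      exact Finset.sum_congr rfl fun p _ => by rw [ih]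

lemma triple_sum {M : Type*} [AddCommMonoid M] (m : ℕ) (f : ℕ → ℕ → ℕ → M) :
    (∑ p ∈ Finset.HasAntidiagonal.antidiagonal m, ∑ q ∈ Finset.HasAntidiagonal.antidiagonal p.2, f p.1 q.1 q.2)
      = ∑ p ∈ Finset.HasAntidiagonal.antidiagonal m, ∑ q ∈ Finset.HasAntidiagonal.antidiagonal p.1, f q.1 q.2 p.2 := by
  rw [Finset.sum_sigma', Finset.sum_sigma']
  refine Finset.sum_nbij' (fun x => ⟨(x.1.1 + x.2.1, x.2.2), (x.1.1, x.2.1)⟩)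
    (fun y => ⟨(y.2.1, y.2.2 + y.1.2), (y.2.2, y.1.2)⟩) ?_ ?_ ?_ ?_ ?_ <;>
    rintro ⟨⟨a, b⟩, ⟨c, d⟩⟩ h <;>
    simp only [Finset.mem_sigma, Finset.mem_antidiagonal] at h ⊢ <;>
    simp_all <;> omega

lemma hockey (n a : ℕ) :
    ∑ p ∈ Finset.HasAntidiagonal.antidiagonal a, (p.2 + n).choose n = (a + n + 1).choose (n + 1) := by
  rw [Finset.Nat.sum_antidiagonal_eq_sum_range_succ_mk]
  have h1 : ∑ i ∈ Finset.range (a + 1), (a - i + n).choose n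
      = ∑ i ∈ Finset.range (a + 1), (i + n).choose n := by
    rw [← Finset.sum_range_reflect]
    exact Finset.sum_congr rfl fun i hi => by
      simp only [Finset.mem_range] at hi
      congr 2
      omega
  rw [h1]
  have h2 := Nat.sum_Icc_choose (a + n) n
  rw [← h2, ← Finset.Ico_add_one_right_eq_Icc, Finset.sum_Ico_eq_sum_range]
  have h3 : a + n + 1 - n = a + 1 := by omega
  rw [h3]
  exact Finset.sum_congr rfl fun i _ => by rw [Nat.add_comm]

lemma intercalate_cons_of_ne_nil {α : Type*} (s a : List α) (l : List (List α)) (h : l ≠ []) :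
    List.intercalate s (a :: l) = a ++ s ++ List.intercalate s l := by
  cases l with
  | nil => exact absurd rfl h
  | cons b l =>
      simp [List.intercalate, List.intersperse_cons_cons, List.append_assoc]

lemma B_one (a : ℕ) : B 1 a = {List.replicate a x0} := by
  simp [B, List.intercalate]

lemma adT_succ (k a : ℕ) : Multiset.Nat.antidiagonalTuple (k + 1) a =
    (Finset.HasAntidiagonal.antidiagonal a).val.bind fun p =>
      (Multiset.Nat.antidiagonalTuple k p.2).map (Fin.cons p.1) := by
  show ((List.Nat.antidiagonalTuple (k + 1) a : List (Fin (k + 1) → ℕ)) :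
      Multiset (Fin (k + 1) → ℕ)) = _
  rw [List.Nat.antidiagonalTuple]
  have hval : (Finset.HasAntidiagonal.antidiagonal a).val = (List.Nat.antidiagonal a : Multiset (ℕ × ℕ)) := rfl
  rw [hval, ← Multiset.coe_bind]
  rfl

lemma bind_val_eq_sum {γ α : Type*} (s : Finset γ) (f : γ → Multiset α) :
    s.val.bind f = ∑ p ∈ s, f p := rfl

lemma B_succ (r : ℕ) (hr : 1 ≤ r) (a : ℕ) :
    B (r + 1) a = ∑ p ∈ Finset.HasAntidiagonal.antidiagonal a,
      (B r p.2).map fun u => List.replicate p.1 x0 ++ x1 :: u := by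
  have hv : (Finset.Nat.antidiagonalTuple (r + 1) a).val
      = Multiset.Nat.antidiagonalTuple (r + 1) a := rfl
  rw [B, hv, adT_succ, Multiset.map_bind, bind_val_eq_sum]
  refine Finset.sum_congr rfl fun p _ => ?_
  rw [Multiset.map_map, B]
  have hv2 : (Finset.Nat.antidiagonalTuple r p.2).val
      = Multiset.Nat.antidiagonalTuple r p.2 := rfl
  rw [hv2, Multiset.map_map]
  congr 1
  funext f
  simp only [Function.comp_apply]
  rw [List.ofFn_succ]
  simp only [Fin.cons_zero, Fin.cons_succ]
  rw [intercalate_cons_of_ne_nil]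
  · simp
  · obtain ⟨r, rfl⟩ := Nat.exists_eq_add_of_le hr
    simp [List.ofFn_succ]

lemma repl_glue (a b : ℕ) (w : List Bool) :
    List.replicate a x0 ++ x0 :: (List.replicate b x0 ++ w)
      = List.replicate (a + b + 1) x0 ++ w := by
  rw [show a + b + 1 = a + (1 + b) from by omega, List.replicate_add, List.replicate_add]
  simp

lemma I_ones (m t : ℕ) : I m (List.replicate t x1) = B (t + 1) m := by
  induction t generalizing m with
  | zero => rw [List.replicate_zero, I, B_one]
  | succ t ih =>
      rw [List.replicate_succ, I, B_succ (t + 1) (Nat.le_add_left 1 t)]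
      exact Finset.sum_congr rfl fun p _ => by rw [ih]

lemma I_x0_block (n : ℕ) (v : List Bool) (m : ℕ) :
    I m (List.replicate (n + 1) x0 ++ v) =
      ∑ p ∈ Finset.HasAntidiagonal.antidiagonal m,
        (p.1 + n).choose n • (I p.2 v).map (List.replicate (p.1 + n + 1) x0 ++ ·) := by
  induction n generalizing m with
  | zero =>
      rw [List.replicate_succ, List.replicate_zero, List.singleton_append, I]
      refine Finset.sum_congr rfl fun p _ => ?_
      rw [Nat.choose_zero_right, one_smul]
      refine congrArg (fun g => Multiset.map g (I p.2 v)) (funext fun w => ?_)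
      rw [show p.1 + 0 + 1 = p.1 + 1 from rfl, List.replicate_succ', List.append_assoc,
        List.singleton_append]
  | succ n ih =>
      rw [List.replicate_succ, List.cons_append, I]
      have step : ∀ p : ℕ × ℕ, p ∈ Finset.HasAntidiagonal.antidiagonal m →
          (I p.2 (List.replicate (n + 1) x0 ++ v)).map
              (fun w => List.replicate p.1 x0 ++ x0 :: w)
            = ∑ q ∈ Finset.HasAntidiagonal.antidiagonal p.2, (q.1 + n).choose n •
                (I q.2 v).map (fun w => List.replicate (p.1 + q.1 + n + 2) x0 ++ w) := by
        intro p _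
        rw [ih, map_finsetSum']
        refine Finset.sum_congr rfl fun q _ => ?_
        rw [Multiset.map_nsmul, Multiset.map_map]
        congr 2
        funext w
        simp only [Function.comp_apply]
        rw [repl_glue, show p.1 + (q.1 + n + 1) + 1 = p.1 + q.1 + n + 2 from by omega]
      rw [Finset.sum_congr rfl step,
        triple_sum m (fun a c b => (c + n).choose n •
          (I b v).map (fun w => List.replicate (a + c + n + 2) x0 ++ w))]
      refine Finset.sum_congr rfl fun p hp => ?_
      have hsum : ∀ q : ℕ × ℕ, q ∈ Finset.HasAntidiagonal.antidiagonal p.1 →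
          (q.2 + n).choose n •
              (I p.2 v).map (fun w => List.replicate (q.1 + q.2 + n + 2) x0 ++ w)
            = (q.2 + n).choose n •
              (I p.2 v).map (fun w => List.replicate (p.1 + n + 2) x0 ++ w) := by
        intro q hq
        rw [Finset.HasAntidiagonal.mem_antidiagonal] at hq
        rw [hq]
      rw [Finset.sum_congr rfl hsum, ← Finset.sum_smul, hockey]
      rfl

lemma I_x1_block (k : ℕ) (v : List Bool) (m : ℕ) :
    I m (List.replicate (k + 1) x1 ++ v) =
      ∑ p ∈ Finset.HasAntidiagonal.antidiagonal m,
        (B (k + 1) p.1).bind fun u => (I p.2 v).map fun w => u ++ x1 :: w := by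
  induction k generalizing m with
  | zero =>
      rw [List.replicate_succ, List.replicate_zero, List.singleton_append, I]
      refine Finset.sum_congr rfl fun p _ => ?_
      rw [B_one, Multiset.singleton_bind]
  | succ k ih =>
      rw [List.replicate_succ, List.cons_append, I]
      have step : ∀ p : ℕ × ℕ, p ∈ Finset.HasAntidiagonal.antidiagonal m →
          (I p.2 (List.replicate (k + 1) x1 ++ v)).map
              (fun w => List.replicate p.1 x0 ++ x1 :: w)
            = ∑ q ∈ Finset.HasAntidiagonal.antidiagonal p.2, (B (k + 1) q.1).bind fun u =>
                (I q.2 v).map fun w =>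
                  List.replicate p.1 x0 ++ x1 :: (u ++ x1 :: w) := by
        intro p _
        rw [ih, map_finsetSum']
        refine Finset.sum_congr rfl fun q _ => ?_
        rw [Multiset.map_bind]
        refine congrArg _ (funext fun u => ?_)
        rw [Multiset.map_map]
        rfl
      rw [Finset.sum_congr rfl step,
        triple_sum m (fun a c b => (B (k + 1) c).bind fun u =>
          (I b v).map fun w => List.replicate a x0 ++ x1 :: (u ++ x1 :: w))]
      refine Finset.sum_congr rfl fun p hp => ?_
      rw [B_succ (k + 1) (Nat.le_add_left 1 k), bind_finsetSum]
      refine Finset.sum_congr rfl fun q _ => ?_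
      rw [Multiset.bind_map]
      refine congrArg _ (funext fun u => ?_)
      refine congrArg (fun g => Multiset.map g (I p.2 v)) (funext fun w => ?_)
      simp [List.append_assoc]

lemma sum_map_bind {γ α M : Type*} [AddCommMonoid M] (t : Multiset γ) (F : γ → Multiset α)
    (g : α → M) :
    ((t.bind F).map g).sum = (t.map fun p => ((F p).map g).sum).sum := by
  induction t using Multiset.induction_on with
  | empty => simp
  | cons a t ih => simp [Multiset.cons_bind, ih]

lemma sum_adT_succ {M : Type*} [AddCommMonoid M] (k n : ℕ) (g : (Fin (k + 1) → ℕ) → M) :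
    ∑ f ∈ Finset.Nat.antidiagonalTuple (k + 1) n, g f =
      ∑ p ∈ Finset.HasAntidiagonal.antidiagonal n,
        ∑ f ∈ Finset.Nat.antidiagonalTuple k p.2, g (Fin.cons p.1 f) := by
  show ((Multiset.Nat.antidiagonalTuple (k + 1) n).map g).sum = _
  rw [adT_succ, sum_map_bind]
  show (∑ p ∈ Finset.HasAntidiagonal.antidiagonal n,
      (((Multiset.Nat.antidiagonalTuple k p.2).map (Fin.cons p.1)).map g).sum) = _
  refine Finset.sum_congr rfl fun p _ => ?_
  rw [Multiset.map_map]
  rfl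

lemma sum_adT_one {M : Type*} [AddCommMonoid M] (n : ℕ) (g : (Fin 1 → ℕ) → M) :
    ∑ f ∈ Finset.Nat.antidiagonalTuple 1 n, g f = g ![n] := by
  rw [Finset.Nat.antidiagonalTuple_one, Finset.sum_singleton]

example (a b c d : ℕ) : (Fin.cons a (Fin.cons b (Fin.cons c ![d])) : Fin 4 → ℕ) 0 = a := rfl
example (a b c d : ℕ) : (Fin.cons a (Fin.cons b (Fin.cons c ![d])) : Fin 4 → ℕ) 1 = b := rfl
example (a b c d : ℕ) : (Fin.cons a (Fin.cons b (Fin.cons c ![d])) : Fin 4 → ℕ) 2 = c := rfl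
example (a b c d : ℕ) : (Fin.cons a (Fin.cons b (Fin.cons c ![d])) : Fin 4 → ℕ) 3 = d := rfl

lemma consEval0 (a : ℕ) (g : Fin 3 → ℕ) : (Fin.cons a g : Fin 4 → ℕ) 0 = a := rfl
lemma consEval1 (a b : ℕ) (g : Fin 2 → ℕ) :
    (Fin.cons a (Fin.cons b g) : Fin 4 → ℕ) 1 = b := rfl
lemma consEval2 (a b c : ℕ) (g : Fin 1 → ℕ) :
    (Fin.cons a (Fin.cons b (Fin.cons c g)) : Fin 4 → ℕ) 2 = c := rfl
lemma consEval3 (a b c d : ℕ) :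
    (Fin.cons a (Fin.cons b (Fin.cons c ![d])) : Fin 4 → ℕ) 3 = d := rfl

lemma sum_adT_four {M : Type*} [AddCommMonoid M] (n : ℕ) (g : (Fin 4 → ℕ) → M) :
    ∑ f ∈ Finset.Nat.antidiagonalTuple 4 n, g f =
      ∑ p ∈ Finset.HasAntidiagonal.antidiagonal n, ∑ q ∈ Finset.HasAntidiagonal.antidiagonal p.2,
        ∑ r ∈ Finset.HasAntidiagonal.antidiagonal q.2,
          g (Fin.cons p.1 (Fin.cons q.1 (Fin.cons r.1 ![r.2]))) := by
  refine (sum_adT_succ 3 n g).trans ?_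
  refine Finset.sum_congr rfl fun p _ => ?_
  refine (sum_adT_succ 2 p.2 _).trans ?_
  refine Finset.sum_congr rfl fun q _ => ?_
  refine (sum_adT_succ 1 q.2 _).trans ?_
  refine Finset.sum_congr rfl fun r _ => ?_
  exact sum_adT_one r.2 _


theorem shuffle_x0_pow_x0x1x0x1 (m n k s t : ℕ)
    (hn : 1 ≤ n) (hk : 1 ≤ k) (hs : 1 ≤ s) (ht : 1 ≤ t) :
    shuffle (List.replicate m x0)
        (List.replicate n x0 ++ List.replicate k x1 ++ List.replicate s x0 ++
          List.replicate t x1) =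
      ∑ f ∈ Finset.Nat.antidiagonalTuple 4 m,
        (Nat.choose (f 0 + n - 1) (n - 1) * Nat.choose (f 2 + s - 1) (s - 1)) •
          ((B k (f 1)).bind fun u => (B (t + 1) (f 3)).map fun v =>
            List.replicate (f 0 + n) x0 ++ u ++ [x1] ++ List.replicate (f 2 + s) x0 ++ v) := by
  obtain ⟨n, rfl⟩ : ∃ n', n = n' + 1 := ⟨n - 1, by omega⟩
  obtain ⟨k, rfl⟩ : ∃ k', k = k' + 1 := ⟨k - 1, by omega⟩
  obtain ⟨s, rfl⟩ : ∃ s', s = s' + 1 := ⟨s - 1, by omega⟩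
  obtain ⟨t, rfl⟩ : ∃ t', t = t' + 1 := ⟨t - 1, by omega⟩
  rw [List.append_assoc, List.append_assoc, shuffle_eq_I, I_x0_block, sum_adT_four]
  refine Finset.sum_congr rfl fun p hp => ?_
  rw [I_x1_block]
  simp only [consEval0, consEval1, consEval2, consEval3, Nat.add_succ_sub_one,
    Nat.succ_sub_one, I_x0_block, I_ones]
  simp only [map_finsetSum', Multiset.map_nsmul, Multiset.map_map, Multiset.map_bind,
    bind_sum_comm, bind_nsmul, Finset.smul_sum, smul_smul]
  refine Finset.sum_congr rfl fun q hq => ?_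
  refine Finset.sum_congr rfl fun r hr => ?_
  congr 2
  funext u
  refine congrArg (fun g => Multiset.map g (B (t + 1 + 1) r.2)) (funext fun w => ?_)
  simp [Function.comp, List.append_assoc, Nat.add_assoc]
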